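/- Consider the Markov process (X(t)) on the finite state space S = {x = (x_{p,k}) : 0 ≤ x_{p,k} ≤ C_p, Σ x_{p,k} ≤ N} with transition rates q(x, x + e_{p,k}) = λ_p r(x) when x_{p,k} + 1 ≤ C_p and r(x) ≥ 1, and q(x, x - e_{p,k}) = μ_p when x_{p,k} > 0, where r(x) = N - Σ_{p,k} x_{p,k}. Then the measure π(x) = (1/Z) (1/r(x)!) Π_{p,k} ρ_p^{x_{p,k}}, with ρ_p = λ_p/μ_p, satisfies the detailed balance equations π(x) q(x, x+e_{p,k}) = π(x+e_{p,k}) q(x+e_{p,k}, x) for all x with x, x+e_{p,k} ∈ S; hence π is a reversible invariant probability distribution. -/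

import Mathlib

/-- The state space of the ribosome process: for each mRNA (p,k), the number of
ribosomes attached, bounded by the capacity C_p. -/
abbrev RiboState (P : ℕ) (K C : Fin P → ℕ) :=
  (i : Σ p : Fin P, Fin (K p)) → Fin (C i.1 + 1)

/-- The measure π(x) = (1/Z)(1/r(x)!) Π ρ_p^{x_{p,k}} is a probability on
S = {x : Σ x ≤ N} (when Z is the partition sum) and satisfies the detailed
balance equations for the ribosome Markov process; hence it is a reversible
invariant distribution. -/
theorem detailed_balance_reversible (N P : ℕ) (hN : 1 ≤ N) (hP : 1 ≤ P)
    (K : Fin P → ℕ) (hK : ∀ p, 1 ≤ K p)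
    (C : Fin P → ℕ) (hC : ∀ p, 1 ≤ C p)
    (lam mu : Fin P → ℝ) (hlam : ∀ p, 0 < lam p) (hmu : ∀ p, 0 < mu p)
    (r : RiboState P K C → ℕ)
    (hr : ∀ x, r x = N - ∑ i, (x i : ℕ))
    (Z : ℝ)
    (hZ : Z = ∑ x ∈ Finset.univ.filter
        (fun x : RiboState P K C => ∑ i, (x i : ℕ) ≤ N),
        (1 / (Nat.factorial (r x) : ℝ)) * ∏ i, (lam i.1 / mu i.1) ^ (x i : ℕ))
    (π : RiboState P K C → ℝ)
    (hπ : ∀ x, π x = (1 / Z) * (1 / (Nat.factorial (r x) : ℝ)) *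
        ∏ i, (lam i.1 / mu i.1) ^ (x i : ℕ)) :
    (∑ x ∈ Finset.univ.filter
        (fun x : RiboState P K C => ∑ i, (x i : ℕ) ≤ N), π x = 1)
    ∧ ∀ (x : RiboState P K C) (i : Σ p : Fin P, Fin (K p))
        (h1 : (x i : ℕ) + 1 ≤ C i.1) (h2 : (∑ j, (x j : ℕ)) + 1 ≤ N),
        π x * (lam i.1 * (r x : ℝ)) =
          π (Function.update x i ⟨(x i : ℕ) + 1, by omega⟩) * mu i.1 := by 
  have hρ : ∀ p : Fin P, 0 < lam p / mu p := fun p => div_pos (hlam p) (hmu p)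
  have hterm : ∀ x : RiboState P K C,
      0 < (1 / (Nat.factorial (r x) : ℝ)) * ∏ i, (lam i.1 / mu i.1) ^ (x i : ℕ) := by
    intro x
    apply mul_pos
    · positivity
    · exact Finset.prod_pos (fun i _ => pow_pos (hρ i.1) _)
  have hZpos : 0 < Z := by
    rw [hZ]
    apply Finset.sum_pos (fun x _ => hterm x)
    exact ⟨fun _ => 0, by simp⟩
  constructor
  · simp only [hπ, mul_assoc]
    rw [← Finset.mul_sum]
    simp only [← mul_assoc, ← hZ]
    field_simp
  · intro x i h1 h2
    have hrx : r x = N - ∑ j, (x j : ℕ) := hr x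
    have hrx1 : 1 ≤ r x := by omega
    set y : RiboState P K C := Function.update x i (⟨(x i : ℕ)+1, by omega⟩ : Fin (C i.1 + 1)) with hy
    have hyy : ∀ j, j ≠ i → (y j : ℕ) = (x j : ℕ) := by
      intro j hj; rw [hy, Function.update_of_ne hj]
    have hyi : (y i : ℕ) = (x i : ℕ) + 1 := by rw [hy, Function.update_self]
    have hsum : ∑ j, (y j : ℕ) = (∑ j, (x j : ℕ)) + 1 := by
      rw [Fintype.sum_eq_add_sum_compl i (fun j => (y j : ℕ)),
        Fintype.sum_eq_add_sum_compl i (fun j => (x j : ℕ)),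
        Finset.sum_congr rfl (fun j hj => hyy j (by simpa using hj))]
      omega
    have hry : r y + 1 = r x := by
      have := hr y
      omega
    have hprod : (∏ j, (lam j.1 / mu j.1) ^ (y j : ℕ)) =
        (lam i.1 / mu i.1) * ∏ j, (lam j.1 / mu j.1) ^ (x j : ℕ) := by
      rw [Fintype.prod_eq_mul_prod_compl i (fun j => (lam j.1 / mu j.1) ^ (y j : ℕ)),
        Fintype.prod_eq_mul_prod_compl i (fun j => (lam j.1 / mu j.1) ^ (x j : ℕ)),
        Finset.prod_congr rfl (fun j hj => by rw [hyy j (by simpa using hj)]), hyi]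
      ring
    have hfact : (Nat.factorial (r x) : ℝ) = (r x : ℝ) * (Nat.factorial (r y) : ℝ) := by
      rw [← hry, Nat.factorial_succ]
      push_cast
      ring
    rw [hπ x, hπ y, hprod, hfact]
    have key : ∀ (z f rr pv a b : ℝ), b ≠ 0 → rr ≠ 0 → f ≠ 0 →
        1/z * (1/(rr*f)) * pv * (a*rr) = 1/z * (1/f) * (a/b*pv) * b := by
      intros z f rr pv a b hb hrr hf
      field_simp
    exact key Z _ _ _ _ _ (ne_of_gt (hmu i.1))
      (by exact_mod_cast Nat.one_le_iff_ne_zero.mp hrx1)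
      (by positivity)
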